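/- Let b_1, b_2, b_3 be positive real numbers and let p(x,y) = (x + b_1)(x + b_2)(x + b_3) + (x + 1)·y (i.e., b_0 = a_0 = a_1 = 1). Set t_1 = b_1 b_2 b_3 and t_2 = (1 + b_1)(1 + b_2)(1 + b_3). If (t_2 + 3)²/(1/√2)² − (t_1 + 3/2)²/(1/2)² < 1 (equivalently, t_2² − 2t_1² + 6t_2 − 6t_1 + 4 < 0), then the net (m,n) ↦ 1/p(m,n), (m,n) ∈ ℤ₊², is not joint completely monotone; indeed Δ_1Δ_2 β(0,1) < 0 for β(m,n) = 1/p(m,n). -/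
import Mathlib


open MeasureTheory Filter

/-- First partial forward difference. -/
def Delta1 (x : ℕ → ℕ → ℝ) : ℕ → ℕ → ℝ := fun m n => x (m + 1) n - x m n

/-- Second partial forward difference. -/
def Delta2 (x : ℕ → ℕ → ℝ) : ℕ → ℕ → ℝ := fun m n => x m (n + 1) - x m n

/-- A net indexed by ℤ₊² is joint completely monotone. -/
def JointCM (x : ℕ → ℕ → ℝ) : Prop :=
  ∀ i j m n : ℕ, 0 ≤ (-1 : ℝ) ^ (i + j) * (Delta1^[i] (Delta2^[j] x)) m n

/-- Forward difference of a sequence. -/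
def DeltaSeq (x : ℕ → ℝ) : ℕ → ℝ := fun m => x (m + 1) - x m

/-- A sequence is completely monotone. -/
def CM (x : ℕ → ℝ) : Prop :=
  ∀ k m : ℕ, 0 ≤ (-1 : ℝ) ^ k * (DeltaSeq^[k] x) m

/-- A sequence is a Hausdorff moment sequence. -/
def IsHausdorffMoment (β : ℕ → ℝ) : Prop :=
  ∃ μ : Measure ℝ, IsFiniteMeasure μ ∧ μ (Set.Icc (0 : ℝ) 1)ᶜ = 0 ∧
    ∀ m : ℕ, β m = ∫ s in Set.Icc (0 : ℝ) 1, s ^ m ∂μ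

/-- Example 4.6: for `p(x,y) = (x+b₁)(x+b₂)(x+b₃) + (x+1)y`,
if `(t₂+3)²/(1/√2)² − (t₁+3/2)²/(1/2)² < 1` where `t₁ = b₁b₂b₃` and
`t₂ = (1+b₁)(1+b₂)(1+b₃)`, then `Δ₁Δ₂β(0,1) < 0` and the net `1/p(m,n)` is not joint
completely monotone. -/
theorem not_jointCM_example
    (b1 b2 b3 : ℝ) (hb1 : 0 < b1) (hb2 : 0 < b2) (hb3 : 0 < b3)
    (hcond : ((1 + b1) * (1 + b2) * (1 + b3) + 3) ^ 2 / (1 / Real.sqrt 2) ^ 2 -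
        (b1 * b2 * b3 + 3 / 2) ^ 2 / ((1 / 2 : ℝ)) ^ 2 < 1) :
    Delta1 (Delta2 (fun m n : ℕ =>
        1 / (((m : ℝ) + b1) * ((m : ℝ) + b2) * ((m : ℝ) + b3) + ((m : ℝ) + 1) * n))) 0 1 < 0 ∧
    ¬ JointCM (fun m n : ℕ =>
        1 / (((m : ℝ) + b1) * ((m : ℝ) + b2) * ((m : ℝ) + b3) + ((m : ℝ) + 1) * n)) := by
  set t1 := b1 * b2 * b3 with ht1
  set t2 := (1 + b1) * (1 + b2) * (1 + b3) with ht2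
  have ht1pos : 0 < t1 := by positivity
  have ht2pos : 0 < t2 := by positivity
  have hs : (1 / Real.sqrt 2 : ℝ) ^ 2 = 1 / 2 := by
    rw [div_pow, one_pow, Real.sq_sqrt (by norm_num : (2:ℝ) ≥ 0)]
  rw [hs] at hcond
  have hkey : t2 ^ 2 + 6 * t2 - 2 * t1 ^ 2 - 6 * t1 + 4 < 0 := by
    have h1 : ((t2 + 3) ^ 2) / (1/2 : ℝ) = 2 * (t2 + 3) ^ 2 := by ring
    have h2 : ((t1 + 3/2) ^ 2) / ((1/2 : ℝ)) ^ 2 = 4 * (t1 + 3/2) ^ 2 := by ring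
    nlinarith [hcond]
  have hineq : (t2 + 2) * (t2 + 4) < 2 * ((t1 + 1) * (t1 + 2)) := by nlinarith
  have hD : Delta1 (Delta2 (fun m n : ℕ =>
      1 / (((m : ℝ) + b1) * ((m : ℝ) + b2) * ((m : ℝ) + b3) + ((m : ℝ) + 1) * n))) 0 1 < 0 := by
    simp only [Delta1, Delta2]
    push_cast
    have e1 : ((0:ℝ) + b1) * ((0:ℝ) + b2) * ((0:ℝ) + b3) = t1 := by ring
    have hp1 : (0:ℝ) < t1 + 1 := by linarith
    have hp2 : (0:ℝ) < t1 + 2 := by linarith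
    have hp3 : (0:ℝ) < t2 + 2 := by linarith
    have hp4 : (0:ℝ) < t2 + 4 := by linarith
    have eq : 1 / (((1:ℝ) + b1) * ((1:ℝ) + b2) * ((1:ℝ) + b3) + ((1:ℝ) + 1) * 2) -
        1 / (((1:ℝ) + b1) * ((1:ℝ) + b2) * ((1:ℝ) + b3) + ((1:ℝ) + 1) * 1) -
        (1 / (((0:ℝ) + b1) * ((0:ℝ) + b2) * ((0:ℝ) + b3) + ((0:ℝ) + 1) * 2) -
         1 / (((0:ℝ) + b1) * ((0:ℝ) + b2) * ((0:ℝ) + b3) + ((0:ℝ) + 1) * 1)) =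
        ((t2 + 2) * (t2 + 4) - 2 * ((t1 + 1) * (t1 + 2))) /
          (((t1 + 1) * (t1 + 2)) * ((t2 + 2) * (t2 + 4))) := by
      have d1 : ((1:ℝ) + b1) * ((1:ℝ) + b2) * ((1:ℝ) + b3) + ((1:ℝ) + 1) * 2 = t2 + 4 := by
        rw [ht2]; ring
      have d2 : ((1:ℝ) + b1) * ((1:ℝ) + b2) * ((1:ℝ) + b3) + ((1:ℝ) + 1) * 1 = t2 + 2 := by
        rw [ht2]; ring
      have d3 : ((0:ℝ) + b1) * ((0:ℝ) + b2) * ((0:ℝ) + b3) + ((0:ℝ) + 1) * 2 = t1 + 2 := by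
        rw [ht1]; ring
      have d4 : ((0:ℝ) + b1) * ((0:ℝ) + b2) * ((0:ℝ) + b3) + ((0:ℝ) + 1) * 1 = t1 + 1 := by
        rw [ht1]; ring
      rw [d1, d2, d3, d4]
      field_simp
      ring
    rw [eq]
    apply div_neg_of_neg_of_pos
    · linarith
    · positivity
  refine ⟨hD, fun hJ => ?_⟩
  have := hJ 1 1 0 1
  simp only [Function.iterate_one, pow_succ, pow_one] at this
  norm_num at this
  simp only [← one_div] at this
  linarith
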